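/- Let p ∈ [1,∞), let I be a nonempty set, and let f, g ∈ ℓ^p(I)^+. Then f ≺_s g if and only if there exists h ∈ ℓ^p(I)^+ such that f(i) ≤ h(i) for all i ∈ I and h ≺ g. -/

import Mathlib

open scoped ENNReal BigOperators

noncomputable section

/-- ℓᵖ(I) with real scalars. -/
abbrev Lp (I : Type*) (p : ℝ≥0∞) := lp (fun _ : I => ℝ) p

/-- The standard basis vector `e_j` of `ℓᵖ(I)`. -/
def stdVec {I : Type*} (p : ℝ≥0∞) (j : I) : Lp I p :=
  haveI := Classical.decEq I
  lp.single p j 1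

/-- A bounded operator on ℓᵖ(I) is positive if it maps the positive cone into itself. -/
def IsPos {I : Type*} {p : ℝ≥0∞} [Fact (1 ≤ p)] (A : Lp I p →L[ℝ] Lp I p) : Prop :=
  ∀ f : Lp I p, (∀ i, 0 ≤ f i) → ∀ i, 0 ≤ A f i

/-- Doubly stochastic operator on ℓᵖ(I). -/
def DoublyStochastic {I : Type*} {p : ℝ≥0∞} [Fact (1 ≤ p)]
    (A : Lp I p →L[ℝ] Lp I p) : Prop :=
  IsPos A ∧ (∀ i : I, HasSum (fun j : I => A (stdVec p j) i) 1)
          ∧ (∀ j : I, HasSum (fun i : I => A (stdVec p j) i) 1)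

/-- Doubly substochastic operator on ℓᵖ(I) (finite partial sums formulation). -/
def DoublySubstochastic {I : Type*} {p : ℝ≥0∞} [Fact (1 ≤ p)]
    (A : Lp I p →L[ℝ] Lp I p) : Prop :=
  IsPos A ∧ (∀ i : I, ∀ s : Finset I, ∑ j ∈ s, A (stdVec p j) i ≤ 1)
          ∧ (∀ j : I, ∀ s : Finset I, ∑ i ∈ s, A (stdVec p j) i ≤ 1)

/-- Increasable doubly substochastic operator on ℓᵖ(I). -/
def IncreasableDsS {I : Type*} {p : ℝ≥0∞} [Fact (1 ≤ p)]
    (A : Lp I p →L[ℝ] Lp I p) : Prop :=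
  IsPos A ∧ ∃ A₁ : Lp I p →L[ℝ] Lp I p, DoublyStochastic A₁ ∧
    ∀ i j : I, A (stdVec p j) i ≤ A₁ (stdVec p j) i

/-- Majorization: `f ≺ g`. -/
def Maj {I : Type*} {p : ℝ≥0∞} [Fact (1 ≤ p)] (f g : Lp I p) : Prop :=
  ∃ D : Lp I p →L[ℝ] Lp I p, DoublyStochastic D ∧ f = D g

/-- Weak majorization: `f ≺_w g`. -/
def MajW {I : Type*} {p : ℝ≥0∞} [Fact (1 ≤ p)] (f g : Lp I p) : Prop :=
  ∃ D : Lp I p →L[ℝ] Lp I p, DoublySubstochastic D ∧ f = D g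

/-- Submajorization: `f ≺_s g`. -/
def MajS {I : Type*} {p : ℝ≥0∞} [Fact (1 ≤ p)] (f g : Lp I p) : Prop :=
  ∃ D : Lp I p →L[ℝ] Lp I p, IncreasableDsS D ∧ f = D g

/-- Permutation operator on ℓᵖ(I). -/
def IsPermutationOp {I : Type*} {p : ℝ≥0∞} [Fact (1 ≤ p)]
    (P : Lp I p →L[ℝ] Lp I p) : Prop :=
  ∃ θ : I ≃ I, ∀ j : I, P (stdVec p j) = stdVec p (θ j)

/-- `P` is the operator `P_θ` associated with the injection `θ : I → I`,
i.e. `P f = ∑_{k ∈ I} f(k) e_{θ(k)}`. -/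
def IsPTheta {I : Type*} {p : ℝ≥0∞} [Fact (1 ≤ p)] (θ : I → I)
    (P : Lp I p →L[ℝ] Lp I p) : Prop :=
  (∀ f : Lp I p, ∀ k : I, P f (θ k) = f k) ∧
  (∀ f : Lp I p, ∀ i : I, i ∉ Set.range θ → P f i = 0)

/-- `T` preserves weak majorization on the positive cone. -/
def PreservesMajW {I : Type*} {p : ℝ≥0∞} [Fact (1 ≤ p)]
    (T : Lp I p →L[ℝ] Lp I p) : Prop :=
  ∀ f g : Lp I p, (∀ i, 0 ≤ f i) → (∀ i, 0 ≤ g i) → MajW f g → MajW (T f) (T g)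

/-- `T` preserves submajorization on the positive cone. -/
def PreservesMajS {I : Type*} {p : ℝ≥0∞} [Fact (1 ≤ p)]
    (T : Lp I p →L[ℝ] Lp I p) : Prop :=
  ∀ f g : Lp I p, (∀ i, 0 ≤ f i) → (∀ i, 0 ≤ g i) → MajS f g → MajS (T f) (T g)

end

section Aux

open scoped ENNReal

variable {I : Type*} {p : ℝ≥0∞} [Fact (1 ≤ p)]

lemma aux_p_ne_zero : p ≠ 0 := by
  have : (1:ℝ≥0∞) ≤ p := Fact.out
  intro h; simp [h] at this

/-- Evaluation at a coordinate as a continuous linear map. -/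
noncomputable def evalCLM (p : ℝ≥0∞) [Fact (1 ≤ p)] (i : I) : Lp I p →L[ℝ] ℝ :=
  LinearMap.mkContinuous
    { toFun := fun f => f i
      map_add' := fun f g => by simp [lp.coeFn_add]
      map_smul' := fun c f => by simp [lp.coeFn_smul] }
    1 (fun f => by rw [one_mul]; exact lp.norm_apply_le_norm aux_p_ne_zero f i)

@[simp] lemma evalCLM_apply (i : I) (f : Lp I p) : evalCLM p i f = f i := rfl

open scoped Classical in
lemma stdVec_apply (j i : I) : (stdVec p j : Lp I p) i = if i = j then (1:ℝ) else 0 := by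
  rcases eq_or_ne i j with rfl | h
  · simpa [stdVec] using lp.single_apply_self (E := fun _ : I => ℝ) p i (1:ℝ)
  · simpa [stdVec, h] using lp.single_apply_ne (E := fun _ : I => ℝ) p j (1:ℝ) h

lemma stdVec_nonneg (j i : I) : 0 ≤ (stdVec p j : Lp I p) i := by
  rw [stdVec_apply]; split <;> norm_num

/-- Expansion of `(D g)(i)` as a sum over the entries of `D`. -/
lemma hasSum_entries (hp : p ≠ ∞) (D : Lp I p →L[ℝ] Lp I p) (g : Lp I p) (i : I) :
    HasSum (fun j => g j * D (stdVec p j) i) (D g i) := by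
  haveI := Classical.decEq I
  have h1 : HasSum (fun j : I => lp.single p j (g j)) g := lp.hasSum_single hp g
  have h2 := h1.mapL ((evalCLM p i).comp D)
  convert h2 using 2 with j
  have h3 : (lp.single p j (g j) : Lp I p) = g j • stdVec p j := by
    have := lp.single_smul (E := fun _ : I => ℝ) p j (g j) (1:ℝ)
    simp only [smul_eq_mul, mul_one] at this
    rw [this, stdVec]; congr!
  rw [h3]
  simp
  rfl

/-- Multiplication by a pointwise-bounded sequence as a continuous linear map. -/
noncomputable def mulCLM (hp : p ≠ ∞) (c : I → ℝ) (hc : ∀ i, |c i| ≤ 1) :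
    Lp I p →L[ℝ] Lp I p := by
  have ht : 0 < p.toReal := ENNReal.toReal_pos aux_p_ne_zero hp
  have key : ∀ x : Lp I p, Memℓp (fun i => c i * x i) p := by
    intro x
    apply memℓp_gen
    refine Summable.of_nonneg_of_le (fun i => by positivity)
      (fun i => ?_) ((lp.memℓp x).summable ht)
    apply Real.rpow_le_rpow (norm_nonneg _) _ ht.le
    calc ‖c i * x i‖ = |c i| * ‖x i‖ := by simp [abs_mul]
    _ ≤ 1 * ‖x i‖ := by gcongr; exact hc i
    _ = ‖x i‖ := one_mul _
  exact LinearMap.mkContinuous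
    { toFun := fun x => ⟨fun i => c i * x i, key x⟩
      map_add' := fun x y => by
        apply lp.ext; funext i
        show c i * (x + y) i = c i * x i + c i * y i
        simp [lp.coeFn_add]; ring
      map_smul' := fun r x => by
        apply lp.ext; funext i
        show c i * (r • x) i = r * (c i * x i)
        simp [lp.coeFn_smul]; ring }
    1 (fun x => by
      rw [one_mul]
      refine lp.norm_le_of_tsum_le ht (norm_nonneg x) ?_
      rw [lp.norm_rpow_eq_tsum ht x]
      refine Summable.tsum_le_tsum (fun i => ?_)
        ((lp.memℓp _).summable ht) ((lp.memℓp x).summable ht)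
      apply Real.rpow_le_rpow (norm_nonneg _) _ ht.le
      calc ‖c i * x i‖ = |c i| * ‖x i‖ := by simp [abs_mul]
      _ ≤ 1 * ‖x i‖ := by gcongr; exact hc i
      _ = ‖x i‖ := one_mul _)

@[simp] lemma mulCLM_apply (hp : p ≠ ∞) (c : I → ℝ) (hc : ∀ i, |c i| ≤ 1)
    (x : Lp I p) (i : I) : mulCLM hp c hc x i = c i * x i := rfl

end Aux


theorem stmt_8 {I : Type*} [Nonempty I] (p : ℝ≥0∞) [Fact (1 ≤ p)] (hp : p ≠ ∞)
    (f g : Lp I p) (hf : ∀ i, 0 ≤ f i) (hg : ∀ i, 0 ≤ g i) :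
    MajS f g ↔ ∃ h : Lp I p, (∀ i, 0 ≤ h i) ∧ (∀ i, f i ≤ h i) ∧ Maj h g := by
  constructor
  · rintro ⟨D, ⟨hDpos, A₁, hA₁, hle⟩, rfl⟩
    refine ⟨A₁ g, fun i => hA₁.1 g hg i, fun i => ?_, A₁, hA₁, rfl⟩
    exact hasSum_le (fun j => mul_le_mul_of_nonneg_left (hle i j) (hg j))
      (hasSum_entries hp D g i) (hasSum_entries hp A₁ g i)
  · rintro ⟨h, hh0, hfh, D, hDds, rfl⟩
    have hDg0 : ∀ i, 0 ≤ D g i := hDds.1 g hg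
    set c : I → ℝ := fun i => if D g i = 0 then 0 else f i / D g i with hcdef
    have hc01 : ∀ i, 0 ≤ c i ∧ c i ≤ 1 := by
      intro i
      by_cases h0 : D g i = 0
      · simp [hcdef, h0]
      · have hpos : 0 < D g i := lt_of_le_of_ne (hDg0 i) (Ne.symm h0)
        refine ⟨by simp only [hcdef, if_neg h0]; exact div_nonneg (hf i) (hDg0 i),
          by simp only [hcdef, if_neg h0]; exact div_le_one_of_le₀ (hfh i) (hDg0 i)⟩
    have habs : ∀ i, |c i| ≤ 1 := fun i => abs_le.2 ⟨by linarith [(hc01 i).1], (hc01 i).2⟩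
    have hcmul : ∀ i, c i * D g i = f i := by
      intro i
      by_cases h0 : D g i = 0
      · have : f i = 0 := le_antisymm (h0 ▸ hfh i) (hf i)
        simp [hcdef, h0, this]
      · simp [hcdef, h0]
    refine ⟨(mulCLM hp c habs).comp D, ⟨?_, D, hDds, ?_⟩, ?_⟩
    · intro x hx i
      show 0 ≤ c i * D x i
      exact mul_nonneg (hc01 i).1 (hDds.1 x hx i)
    · intro i j
      show c i * D (stdVec p j) i ≤ D (stdVec p j) i
      exact mul_le_of_le_one_left (hDds.1 (stdVec p j) (stdVec_nonneg j) i) (hc01 i).2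
    · apply lp.ext; funext i
      show f i = c i * D g i
      exact (hcmul i).symm
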